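/- Let (A,m) be a Noetherian local ring and s an integer. Suppose x ∈ m \ m^2 is a nonzerodivisor on A and the map m^{i−1}/m^i → m^i/m^{i+1} induced by multiplication by x is injective for 1 ≤ i ≤ s. Then there is an A-module isomorphism (m^s, x)/x(m^s, x) ≅ A/(m^s, x) ⊕ (m^s, x)/(x). -/

import Mathlib

open IsLocalRing

universe u

noncomputable section

/-- The Jacobson radical of the zero ideal.  For a (not necessarily local) commutative
ring this plays the role of the maximal ideal `𝔪` of a local ring: when `A` is local it
coincides with `IsLocalRing.maximalIdeal A`. -/
def mIdl (A : Type u) [CommRing A] : Ideal A := (⊥ : Ideal A).jacobson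

/-- The Loewy length `ℓℓ(M) = min { i ≥ 0 ∣ 𝔪^i M = 0 }`, valued in `ℕ∞`
(`⊤` if no power of the maximal ideal kills `M`). -/
def loewyLength (A : Type u) [CommRing A] (M : Type u) [AddCommGroup M] [Module A M] : ℕ∞ :=
  sInf {e : ℕ∞ | ∃ i : ℕ, e = i ∧ (mIdl A ^ i) • (⊤ : Submodule A M) = ⊥}

/-- The length of a module: the Krull dimension of its lattice of submodules,
i.e. the supremum of lengths of chains of submodules. -/
def moduleLength (A : Type u) [CommRing A] (M : Type u) [AddCommGroup M] [Module A M] :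
    WithBot ℕ∞ :=
  Order.krullDim (Submodule A M)

/-- The embedding dimension of a local ring: `dim_k 𝔪/𝔪²`. -/
def embDim (A : Type u) [CommRing A] [IsLocalRing A] : ℕ :=
  Module.finrank (ResidueField A) (CotangentSpace A)

/-- A local ring is regular if its Krull dimension equals its embedding dimension. -/
def IsRegularLocal (A : Type u) [CommRing A] [IsLocalRing A] : Prop :=
  ringKrullDim A = ((embDim A : ℕ∞) : WithBot ℕ∞)

open Classical in
/-- The order of a local ring `A`:  `1` if `A` is regular, and otherwise
`min { n ∣ length (A/𝔪^{n+1}) < (n + c).choose n }` where `c` is the embedding dimension. -/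
def ringOrder (A : Type u) [CommRing A] [IsLocalRing A] : ℕ :=
  if IsRegularLocal A then 1
  else sInf {n : ℕ | moduleLength A (A ⧸ (mIdl A) ^ (n + 1)) <
    (((n + embDim A).choose n : ℕ∞) : WithBot ℕ∞)}

/-- `x ∈ 𝔪` is `A`-superficial if there is `c > 0` with
`(𝔪^{n+1} : x) ∩ 𝔪^c = 𝔪^n` for all `n ≫ 0`. -/
def IsSuperficial (A : Type u) [CommRing A] (x : A) : Prop :=
  x ∈ mIdl A ∧ ∃ c : ℕ, 0 < c ∧ ∃ N : ℕ, ∀ n ≥ N,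
    (mIdl A ^ (n + 1)).colon (Ideal.span {x}) ⊓ mIdl A ^ c = mIdl A ^ n

/-- `ϑ(A,x) = inf { n ∣ (𝔪^{n+1} : x) ≠ 𝔪^n }` (`⊤` if there is no such `n`). -/
def theta (A : Type u) [CommRing A] (x : A) : ℕ∞ :=
  sInf {e : ℕ∞ | ∃ n : ℕ, e = n ∧ (mIdl A ^ (n + 1)).colon (Ideal.span {x}) ≠ mIdl A ^ n}

/-- `x₁, …, x_r` is an `A`-superficial sequence if `x_i` is superficial for
`A/(x₁, …, x_{i-1})` for each `i`. -/
def IsSuperficialSeq : (A : Type u) → [inst : CommRing A] → List A → Prop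
  | _, _, [] => True
  | A, _, x :: xs =>
      IsSuperficial A x ∧
        IsSuperficialSeq (A ⧸ Ideal.span {x})
          (xs.map (Ideal.Quotient.mk (Ideal.span {x})))
termination_by A inst xs => xs.length
decreasing_by simp [List.length_map]

/-- `ϑ(A, x₁…x_d) = inf { ϑ(A_i, x_{i+1}) ∣ 0 ≤ i ≤ d-1 }` where `A_i = A/(x₁,…,x_i)`. -/
def thetaSeq : (A : Type u) → [inst : CommRing A] → List A → ℕ∞
  | _, _, [] => ⊤
  | A, _, x :: xs =>
      min (theta A x)
        (thetaSeq (A ⧸ Ideal.span {x})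
          (xs.map (Ideal.Quotient.mk (Ideal.span {x}))))
termination_by A inst xs => xs.length
decreasing_by simp [List.length_map]

/-- `ϑ(A) = sup { ϑ(A, 𝐱) ∣ 𝐱 a maximal superficial sequence }`. -/
def thetaSup (A : Type u) [CommRing A] : ℕ∞ :=
  sSup {e : ℕ∞ | ∃ xs : List A, IsSuperficialSeq A xs ∧
    (xs.length : WithBot ℕ∞) = ringKrullDim A ∧ e = thetaSeq A xs}

/-- A local ring is Cohen–Macaulay iff it admits a regular sequence, contained in the
maximal ideal, whose length is the Krull dimension. -/
def IsCohenMacaulayLocal (A : Type u) [CommRing A] : Prop :=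
  ∃ rs : List A, (∀ r ∈ rs, r ∈ mIdl A) ∧ RingTheory.Sequence.IsRegular A rs ∧
    (rs.length : WithBot ℕ∞) = ringKrullDim A

/-- A finitely generated module is maximal Cohen–Macaulay iff it admits a weakly regular
sequence, contained in the maximal ideal, whose length is the Krull dimension of the ring. -/
def IsMaximalCohenMacaulay (A : Type u) [CommRing A] (M : Type u) [AddCommGroup M]
    [Module A M] : Prop :=
  Module.Finite A M ∧ ∃ rs : List A, (∀ r ∈ rs, r ∈ mIdl A) ∧
    RingTheory.Sequence.IsWeaklyRegular M rs ∧ (rs.length : WithBot ℕ∞) = ringKrullDim A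

/-- `M` has a free direct summand (a direct summand isomorphic to `A`). -/
def HasFreeSummand (A : Type u) [CommRing A] (M : Type u) [AddCommGroup M] [Module A M] :
    Prop :=
  ∃ N P : Submodule A M, IsCompl N P ∧ Nonempty (N ≃ₗ[A] A)

/-- Auslander's delta invariant: the smallest `n` such that there is an epimorphism
`X ⊕ A^n → M` with `X` maximal Cohen–Macaulay having no free direct summand. -/
def deltaInv (A : Type u) [CommRing A] (M : Type u) [AddCommGroup M] [Module A M] : ℕ :=
  sInf {n : ℕ | ∃ X : ModuleCat.{u} A, IsMaximalCohenMacaulay A X ∧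
    ¬ HasFreeSummand A X ∧ ∃ f : (X × (Fin n → A)) →ₗ[A] M, Function.Surjective f}

/-- Auslander's index: `index(A) = min { n ∣ δ_A(A/𝔪^n) ≥ 1 }`. -/
def AuslanderIndex (A : Type u) [CommRing A] : ℕ :=
  sInf {n : ℕ | 1 ≤ deltaInv A (A ⧸ (mIdl A) ^ n)}

/-- `A` has finite injective dimension as a module over itself: there is a finite
injective resolution `0 → A → I⁰ → I¹ → ⋯ → Iⁿ → 0`. -/
def FiniteSelfInjDim (A : Type u) [CommRing A] : Prop :=
  ∃ (n : ℕ) (I : ℕ → ModuleCat.{u} A) (ε : A →ₗ[A] I 0) (d : ∀ i, I i →ₗ[A] I (i + 1)),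
    (∀ i, Module.Injective A (I i)) ∧
    Function.Injective ε ∧
    LinearMap.range ε = LinearMap.ker (d 0) ∧
    (∀ i, LinearMap.range (d i) = LinearMap.ker (d (i + 1))) ∧
    (∀ i, n < i → Subsingleton (I i))

/-- `M` admits a projective resolution `0 → P_n → ⋯ → P₀ → M → 0` of length at most `n`. -/
def HasProjResLengthLE (A : Type u) [CommRing A] (M : Type u) [AddCommGroup M] [Module A M]
    (n : ℕ) : Prop :=
  ∃ (P : ℕ → ModuleCat.{u} A) (ε : P 0 →ₗ[A] M) (d : ∀ i, P (i + 1) →ₗ[A] P i),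
    (∀ i, Module.Projective A (P i)) ∧
    Function.Surjective ε ∧
    LinearMap.ker ε = LinearMap.range (d 0) ∧
    (∀ i, LinearMap.ker (d i) = LinearMap.range (d (i + 1))) ∧
    (∀ i, n < i → Subsingleton (P i))

/-- `M` has finite projective dimension. -/
def FiniteProjDim (A : Type u) [CommRing A] (M : Type u) [AddCommGroup M] [Module A M] :
    Prop :=
  ∃ n : ℕ, HasProjResLengthLE A M n

/-- The projective dimension of `M`, valued in `ℕ∞`. -/
def projDim (A : Type u) [CommRing A] (M : Type u) [AddCommGroup M] [Module A M] : ℕ∞ :=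
  sInf {e : ℕ∞ | ∃ n : ℕ, e = n ∧ HasProjResLengthLE A M n}

/-- The order of the element `x`: the largest `n` with `x ∈ 𝔪^n`. -/
def elemOrder (A : Type u) [CommRing A] (x : A) : ℕ := sSup {n : ℕ | x ∈ mIdl A ^ n}

/-- The initial form `x*` of `x` (of degree `t = elemOrder A x`) is a nonzerodivisor on the
associated graded ring `G(A) = ⊕ 𝔪^n/𝔪^{n+1}`:  since the annihilator of a homogeneous
element is homogeneous, this says exactly that `x*` annihilates no nonzero homogeneous
element, i.e. for `a ∈ 𝔪^n`, `x·a ∈ 𝔪^{n+t+1}` forces `a ∈ 𝔪^{n+1}`. -/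
def InitialFormRegular (A : Type u) [CommRing A] (x : A) : Prop :=
  ∀ (n : ℕ) (a : A), a ∈ mIdl A ^ n →
    x * a ∈ mIdl A ^ (n + elemOrder A x + 1) → a ∈ mIdl A ^ (n + 1)

/-- The initial form of `x` is a *linear* form (`x ∈ 𝔪 \ 𝔪²`) which is a nonzerodivisor
on the associated graded ring `G(A)`. -/
def LinearInitialFormRegular (A : Type u) [CommRing A] (x : A) : Prop :=
  x ∈ mIdl A ∧ x ∉ mIdl A ^ 2 ∧
    ∀ (n : ℕ) (a : A), a ∈ mIdl A ^ n →
      x * a ∈ mIdl A ^ (n + 2) → a ∈ mIdl A ^ (n + 1)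

/-- The initial forms `x₁*, …, x_r*` (all of degree one) form a regular sequence on the
associated graded ring `G(A)`; since `G(A)/(x₁*) ≅ G(A/(x₁))` once `x₁*` is a
nonzerodivisor, this is expressed by the natural recursion through the quotient rings. -/
def GradedLinRegSeq : (A : Type u) → [inst : CommRing A] → List A → Prop
  | _, _, [] => True
  | A, _, x :: xs =>
      LinearInitialFormRegular A x ∧
        GradedLinRegSeq (A ⧸ Ideal.span {x})
          (xs.map (Ideal.Quotient.mk (Ideal.span {x})))
termination_by A inst xs => xs.length
decreasing_by simp [List.length_map]

/-- The associated graded ring `G(A)` of a local ring with infinite residue field is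
Cohen–Macaulay iff some sequence of `dim A` linear forms is a `G(A)`-regular sequence. -/
def AssocGradedIsCM (A : Type u) [CommRing A] : Prop :=
  ∃ ys : List A, (ys.length : WithBot ℕ∞) = ringKrullDim A ∧ GradedLinRegSeq A ys

set_option maxHeartbeats 1000000 in
/-- **Ding's lemma, part (2).**  Let `(A,𝔪)` be a Noetherian local ring, `s` an integer,
and `x ∈ 𝔪 \\ 𝔪²` a nonzerodivisor on `A` such that multiplication by `x` induces an
injection `𝔪^{i-1}/𝔪^i → 𝔪^i/𝔪^{i+1}` for `1 ≤ i ≤ s`.  Then there is an `A`-module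
isomorphism `(𝔪^s,x)/x(𝔪^s,x) ≅ A/(𝔪^s,x) ⊕ (𝔪^s,x)/(x)`. -/
theorem ding_decomposition (A : Type u) [CommRing A] [IsNoetherianRing A]
    [IsLocalRing A] (s : ℕ) (x : A) (hx : x ∈ mIdl A) (hx2 : x ∉ mIdl A ^ 2)
    (hreg : x ∈ nonZeroDivisors A)
    (hinj : ∀ i : ℕ, 1 ≤ i → i ≤ s → ∀ a ∈ mIdl A ^ (i - 1),
      x * a ∈ mIdl A ^ (i + 1) → a ∈ mIdl A ^ i) :
    Nonempty
      ((↥(mIdl A ^ s ⊔ Ideal.span {x}) ⧸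
          (Submodule.comap (mIdl A ^ s ⊔ Ideal.span {x}).subtype
            (Ideal.span {x} * (mIdl A ^ s ⊔ Ideal.span {x})))) ≃ₗ[A]
        ((A ⧸ (mIdl A ^ s ⊔ Ideal.span {x})) ×
          (↥(mIdl A ^ s ⊔ Ideal.span {x}) ⧸
            (Submodule.comap (mIdl A ^ s ⊔ Ideal.span {x}).subtype
              (Ideal.span {x} : Ideal A))))) := by
  classical
  set m : Ideal A := mIdl A with hm
  set I : Ideal A := m ^ s ⊔ Ideal.span {x} with hIdef
  have hmax : m = maximalIdeal A := IsLocalRing.jacobson_eq_maximalIdeal ⊥ bot_ne_top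
  have hxspan : x ∈ Ideal.span {x} := Ideal.mem_span_singleton_self x
  have hxI : x ∈ I := Submodule.mem_sup_right hxspan
  have hmsI : m ^ s ≤ I := le_sup_left
  -- Lemma A : (m^s : x) ⊆ m^{s-1}
  have lemA : ∀ a : A, x * a ∈ m ^ s → a ∈ m ^ (s - 1) := by
    have key : ∀ j, j ≤ s - 1 → ∀ a : A, x * a ∈ m ^ s → a ∈ m ^ j := by
      intro j
      induction j with
      | zero => intro _ a _; rw [pow_zero, Ideal.one_eq_top]; exact Submodule.mem_top
      | succ j ih =>
        intro hj a ha
        have h1 : a ∈ m ^ j := ih (by omega) a ha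
        have h2 : x * a ∈ m ^ (j + 1 + 1) := Ideal.pow_le_pow_right (by omega) ha
        exact hinj (j + 1) (by omega) (by omega) a (by simpa using h1) h2
    exact fun a ha => key (s - 1) le_rfl a ha
  -- Lemma B
  have lemB : ∀ a : A, a ∈ m ^ (s - 1) → x * a ∈ m ^ (s + 1) → a ∈ m ^ s := by
    intro a ha hxa
    cases s with
    | zero => rw [pow_zero, Ideal.one_eq_top]; exact Submodule.mem_top
    | succ n => exact hinj (n + 1) (by omega) le_rfl a (by simpa using ha) hxa
  -- Lemma X : x * m^{s-1} ⊆ m^s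
  have lemX : ∀ a : A, a ∈ m ^ (s - 1) → x * a ∈ m ^ s := by
    intro a ha
    cases s with
    | zero => rw [pow_zero, Ideal.one_eq_top]; exact Submodule.mem_top
    | succ n =>
      have ha' : a ∈ m ^ n := by simpa using ha
      have h := Ideal.mul_mem_mul ha' hx
      rw [← pow_succ] at h
      rwa [mul_comm x a]
  -- the submodule x·m^{s-1}
  set W : Ideal A := Submodule.map (LinearMap.lsmul A A x) (m ^ (s - 1)) with hWdef
  have hmemW : ∀ a : A, a ∈ m ^ (s - 1) → x * a ∈ W := by
    intro a ha
    exact ⟨a, ha, by simp⟩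
  have hWle : W ≤ m ^ s := by
    rintro z ⟨α, hα, rfl⟩
    simpa using lemX α hα
  -- Zorn: choose a complement C of W inside m^s over the residue field
  set S : Set (Ideal A) := {C | m ^ (s + 1) ≤ C ∧ C ≤ m ^ s ∧ C ⊓ W ≤ m ^ (s + 1)}
    with hSdef
  have hS0 : m ^ (s + 1) ∈ S := ⟨le_rfl, Ideal.pow_le_pow_right (by omega), inf_le_left⟩
  obtain ⟨C, -, hCmax⟩ : ∃ C, m ^ (s + 1) ≤ C ∧ Maximal (· ∈ S) C := by
    apply zorn_le_nonempty₀ S ?_ _ hS0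
    intro c hcS hchain y hy
    have hne : c.Nonempty := ⟨y, hy⟩
    haveI : Nonempty c := hne.to_subtype
    refine ⟨sSup c, ⟨le_trans (hcS hy).1 (le_sSup hy), sSup_le fun z hz => (hcS hz).2.1, ?_⟩,
      fun z hz => le_sSup hz⟩
    intro z hz
    obtain ⟨hz1, hz2⟩ := Submodule.mem_inf.mp hz
    obtain ⟨p, hp⟩ := (Submodule.mem_iSup_of_directed _ hchain.directed).mp
      (sSup_eq_iSup' c ▸ hz1)
    exact (hcS p.2).2.2 (Submodule.mem_inf.mpr ⟨hp, hz2⟩)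
  obtain ⟨hC1, hC2, hC3⟩ := hCmax.prop
  -- C + W = m^s
  have hCW : C ⊔ W = m ^ s := by
    refine le_antisymm (sup_le hC2 hWle) ?_
    intro u hu
    by_contra hu2
    have hC'S : C ⊔ Ideal.span {u} ∈ S := by
      refine ⟨le_trans hC1 le_sup_left,
        sup_le hC2 (by rwa [Ideal.span_le, Set.singleton_subset_iff]), ?_⟩
      intro z hz
      obtain ⟨hz1, hz2⟩ := Submodule.mem_inf.mp hz
      obtain ⟨c, hc, t, ht, rfl⟩ := Submodule.mem_sup.mp hz1
      obtain ⟨a, rfl⟩ := Ideal.mem_span_singleton'.mp ht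
      by_cases ham : a ∈ m
      · have hau : a * u ∈ m ^ (s + 1) := by
          have h := Ideal.mul_mem_mul hu ham
          rw [← pow_succ] at h
          rwa [mul_comm a u]
        exact hC3 (Submodule.mem_inf.mpr ⟨add_mem hc (hC1 hau), hz2⟩)
      · exfalso
        have hunit : IsUnit a := IsLocalRing.notMem_maximalIdeal.mp (by rwa [← hmax])
        obtain ⟨b, hb⟩ := hunit.exists_left_inv
        have h1 : a * u ∈ C ⊔ W := by
          have heq : a * u = (c + a * u) - c := by ring
          rw [heq]
          exact sub_mem (Submodule.mem_sup_right hz2) (Submodule.mem_sup_left hc)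
        have h2 : u ∈ C ⊔ W := by
          have heq : u = b * (a * u) := by rw [← mul_assoc, hb, one_mul]
          rw [heq]
          exact Ideal.mul_mem_left _ b h1
        exact hu2 h2
    have hle' : C ⊔ Ideal.span {u} ≤ C := hCmax.2 hC'S le_sup_left
    exact hu2 (Submodule.mem_sup_left
      (hle' (Submodule.mem_sup_right (Ideal.mem_span_singleton_self u))))
  have hdecomp : ∀ u ∈ m ^ s, ∃ c ∈ C, ∃ α ∈ m ^ (s - 1), u = c + x * α := by
    intro u hu
    rw [← hCW] at hu
    obtain ⟨c, hc, w, hw, rfl⟩ := Submodule.mem_sup.mp hu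
    obtain ⟨α, hα, rfl⟩ := hw
    exact ⟨c, hc, α, hα, by simp⟩
  -- the two submodules appearing in the statement
  set J1 : Submodule A ↥I := Submodule.comap I.subtype (Ideal.span {x} * I) with hJ1def
  set J2 : Submodule A ↥I := Submodule.comap I.subtype (Ideal.span {x}) with hJ2def
  -- the surjection φ : C × m^{s-1} → m^s,  (c, α) ↦ c + x α
  set φ : (↥C × ↥(m ^ (s - 1))) →ₗ[A] ↥(m ^ s) :=
    (Submodule.inclusion hC2).coprod
      (LinearMap.codRestrict (m ^ s) (x • (m ^ (s - 1)).subtype)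
        (fun α => by simpa using lemX α.1 α.2)) with hφdef
  have hφcoe : ∀ (c : ↥C) (α : ↥(m ^ (s - 1))), (↑(φ (c, α)) : A) = ↑c + x * ↑α := by
    intro c α
    simp [hφdef, Submodule.coe_inclusion]
  have hφsurj : Function.Surjective φ := by
    rintro ⟨u, hu⟩
    obtain ⟨c, hc, α, hα, hrep⟩ := hdecomp u hu
    refine ⟨(⟨c, hc⟩, ⟨α, hα⟩), Subtype.ext ?_⟩
    rw [hφcoe]
    exact hrep.symm
  -- H2 : (c, α) ↦ α mod I
  set H2 : (↥C × ↥(m ^ (s - 1))) →ₗ[A] A ⧸ I :=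
    I.mkQ.comp ((m ^ (s - 1)).subtype.comp (LinearMap.snd A ↥C ↥(m ^ (s - 1)))) with hH2def
  have hH2apply : ∀ p : ↥C × ↥(m ^ (s - 1)), H2 p = I.mkQ ↑p.2 := fun p => rfl
  have hkerφ : LinearMap.ker φ ≤ LinearMap.ker H2 := by
    rintro ⟨c, α⟩ hp
    have h0 : (↑(φ (c, α)) : A) = 0 := by rw [LinearMap.mem_ker.mp hp]; rfl
    rw [hφcoe] at h0
    have h1 : x * (α : A) = -(c : A) := by linear_combination h0
    have h2 : x * (α : A) ∈ C ⊓ W :=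
      Submodule.mem_inf.mpr ⟨h1 ▸ neg_mem c.2, hmemW _ α.2⟩
    have h3 : (α : A) ∈ m ^ s := lemB α α.2 (hC3 h2)
    rw [LinearMap.mem_ker, hH2apply, Submodule.mkQ_apply, Submodule.Quotient.mk_eq_zero]
    exact hmsI h3
  -- G : m^s → A/I,  c + x α ↦ α mod I
  set e2 := LinearMap.quotKerEquivOfSurjective φ hφsurj with he2def
  have he2mk : ∀ p, e2 (Submodule.Quotient.mk p) = φ p := fun p => rfl
  set G : ↥(m ^ s) →ₗ[A] A ⧸ I :=
    (Submodule.liftQ (LinearMap.ker φ) H2 hkerφ).comp e2.symm.toLinearMap with hGdef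
  have hGapply : ∀ (c : ↥C) (α : ↥(m ^ (s - 1))) (v : ↥(m ^ s)),
      (v : A) = ↑c + x * ↑α → G v = I.mkQ ↑α := by
    intro c α v hv
    have hveq : v = φ (c, α) := Subtype.ext (by rw [hφcoe]; exact hv)
    have hsymm : e2.symm (φ (c, α)) = Submodule.Quotient.mk (c, α) := by
      rw [LinearEquiv.symm_apply_eq, he2mk]
    show (Submodule.liftQ (LinearMap.ker φ) H2 hkerφ) (e2.symm v) = I.mkQ ↑α
    rw [hveq, hsymm, Submodule.liftQ_apply, hH2apply]
  -- ψ : A × m^s → I,  (a, u) ↦ a x + u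
  set ψ : (A × ↥(m ^ s)) →ₗ[A] ↥I :=
    (LinearMap.toSpanSingleton A ↥I ⟨x, hxI⟩).coprod (Submodule.inclusion hmsI) with hψdef
  have hψcoe : ∀ (a : A) (u : ↥(m ^ s)), (↑(ψ (a, u)) : A) = a * x + ↑u := by
    intro a u
    simp [hψdef, Submodule.coe_inclusion, LinearMap.toSpanSingleton_apply]
  have hψsurj : Function.Surjective ψ := by
    rintro ⟨y, hy⟩
    rw [hIdef] at hy
    obtain ⟨u, hu, t, ht, hrep⟩ := Submodule.mem_sup.mp hy
    obtain ⟨a, rfl⟩ := Ideal.mem_span_singleton'.mp ht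
    refine ⟨(a, ⟨u, hu⟩), Subtype.ext ?_⟩
    rw [hψcoe]
    show a * x + u = y
    linear_combination hrep
  -- H : (a, u) ↦ a mod I + G u
  set H : (A × ↥(m ^ s)) →ₗ[A] A ⧸ I :=
    (I.mkQ.comp (LinearMap.fst A A ↥(m ^ s))) + (G.comp (LinearMap.snd A A ↥(m ^ s)))
    with hHdef
  have hHapply : ∀ p : A × ↥(m ^ s), H p = I.mkQ p.1 + G p.2 := fun p => rfl
  have hkerψ : LinearMap.ker ψ ≤ LinearMap.ker H := by
    rintro ⟨a, u⟩ hp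
    have h0 : (↑(ψ (a, u)) : A) = 0 := by rw [LinearMap.mem_ker.mp hp]; rfl
    rw [hψcoe] at h0
    have hxa : x * a ∈ m ^ s := by
      have heq : x * a = -(u : A) := by linear_combination h0
      rw [heq]; exact neg_mem u.2
    have ha1 : a ∈ m ^ (s - 1) := lemA a hxa
    have hGu : G u = I.mkQ (-a) := by
      apply hGapply 0 ⟨-a, neg_mem ha1⟩
      show (u : A) = ↑(0 : ↥C) + x * (-a)
      push_cast
      linear_combination h0
    rw [LinearMap.mem_ker, hHapply, hGu, ← map_add]
    simp
  -- F : I → A/I,  a x + u ↦ a + G u mod I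
  set e1 := LinearMap.quotKerEquivOfSurjective ψ hψsurj with he1def
  have he1mk : ∀ p, e1 (Submodule.Quotient.mk p) = ψ p := fun p => rfl
  set F : ↥I →ₗ[A] A ⧸ I :=
    (Submodule.liftQ (LinearMap.ker ψ) H hkerψ).comp e1.symm.toLinearMap with hFdef
  have hFapply : ∀ (a : A) (u : ↥(m ^ s)) (y : ↥I), (y : A) = a * x + ↑u →
      F y = I.mkQ a + G u := by
    intro a u y hy
    have hyeq : y = ψ (a, u) := Subtype.ext (by rw [hψcoe]; exact hy)
    have hsymm : e1.symm (ψ (a, u)) = Submodule.Quotient.mk (a, u) := by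
      rw [LinearEquiv.symm_apply_eq, he1mk]
    show (Submodule.liftQ (LinearMap.ker ψ) H hkerψ) (e1.symm y) = I.mkQ a + G u
    rw [hyeq, hsymm, Submodule.liftQ_apply, hHapply]
  -- the map Φ
  set Φ : ↥I →ₗ[A] (A ⧸ I) × (↥I ⧸ J2) := F.prod J2.mkQ with hΦdef
  have hΦapply : ∀ y : ↥I, Φ y = (F y, J2.mkQ y) := fun y => rfl
  have hJ1le : J1 ≤ LinearMap.ker Φ := by
    intro y hyJ1
    have hyx : (y : A) ∈ Ideal.span {x} * I := hyJ1
    have hy2 : (y : A) ∈ Ideal.span {x} := Ideal.mul_le_left hyx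
    obtain ⟨z, hzI, hzx⟩ := Ideal.mem_span_singleton_mul.mp hyx
    rw [hIdef] at hzI
    obtain ⟨w, hw, t, ht, hrep⟩ := Submodule.mem_sup.mp hzI
    obtain ⟨b, rfl⟩ := Ideal.mem_span_singleton'.mp ht
    have hxw : x * w ∈ m ^ s := Ideal.mul_mem_left _ x hw
    have hF : F y = I.mkQ (x * b) + G ⟨x * w, hxw⟩ := by
      apply hFapply
      show (y : A) = (x * b) * x + x * w
      rw [← hzx, ← hrep]; ring
    have hG0 : G ⟨x * w, hxw⟩ = I.mkQ w := by
      apply hGapply 0 ⟨w, Ideal.pow_le_pow_right (Nat.sub_le s 1) hw⟩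
      show ((⟨x * w, hxw⟩ : ↥(m ^ s)) : A) = ↑(0 : ↥C) + x * w
      push_cast; ring
    have hFy : F y = 0 := by
      rw [hF, hG0]
      have hxb : I.mkQ (x * b) = 0 := by
        rw [Submodule.mkQ_apply, Submodule.Quotient.mk_eq_zero]
        exact Submodule.mem_sup_right (Ideal.mem_span_singleton'.mpr ⟨b, mul_comm b x⟩)
      have hwI : I.mkQ w = 0 := by
        rw [Submodule.mkQ_apply, Submodule.Quotient.mk_eq_zero]
        exact hmsI hw
      rw [hxb, hwI, add_zero]
    have hq : J2.mkQ y = 0 := by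
      rw [Submodule.mkQ_apply, Submodule.Quotient.mk_eq_zero, hJ2def]
      exact Submodule.mem_comap.mpr (by simpa using hy2)
    rw [LinearMap.mem_ker, hΦapply, hFy, hq]
    rfl
  have hkerΦ : LinearMap.ker Φ ≤ J1 := by
    intro y hy
    rw [LinearMap.mem_ker, hΦapply] at hy
    have hFy : F y = 0 := congrArg Prod.fst hy
    have hq : J2.mkQ y = 0 := congrArg Prod.snd hy
    have hy2 : (y : A) ∈ Ideal.span {x} := by
      rw [Submodule.mkQ_apply, Submodule.Quotient.mk_eq_zero, hJ2def] at hq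
      simpa using hq
    obtain ⟨a, ha⟩ := Ideal.mem_span_singleton'.mp hy2
    have hF' : F y = I.mkQ a := by
      have h := hFapply a 0 y (by rw [← ha]; push_cast; ring)
      rw [h, map_zero, add_zero]
    have haI : a ∈ I := by
      rw [hF', Submodule.mkQ_apply, Submodule.Quotient.mk_eq_zero] at hFy
      exact hFy
    rw [hJ1def]
    apply Submodule.mem_comap.mpr
    have hmem : (y : A) ∈ Ideal.span {x} * I := by
      rw [← ha, mul_comm a x]
      exact Ideal.mul_mem_mul hxspan haI
    simpa using hmem
  have hΦsurj : Function.Surjective Φ := by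
    rintro ⟨p, q⟩
    obtain ⟨y, rfl⟩ := Submodule.mkQ_surjective J2 q
    obtain ⟨b, hb⟩ := Submodule.mkQ_surjective I (p - F y)
    refine ⟨y + b • ⟨x, hxI⟩, ?_⟩
    have hFx : F ⟨x, hxI⟩ = I.mkQ 1 := by
      have h := hFapply 1 0 ⟨x, hxI⟩ (by push_cast; ring)
      rw [h, map_zero, add_zero]
    have hF : F (y + b • ⟨x, hxI⟩) = p := by
      rw [map_add, map_smul, hFx, ← map_smul, smul_eq_mul, mul_one, hb]
      abel
    have hq2 : J2.mkQ (y + b • ⟨x, hxI⟩) = J2.mkQ y := by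
      rw [map_add, map_smul]
      have hx0 : J2.mkQ ⟨x, hxI⟩ = 0 := by
        rw [Submodule.mkQ_apply, Submodule.Quotient.mk_eq_zero, hJ2def]
        exact Submodule.mem_comap.mpr (by simpa using hxspan)
      rw [hx0, smul_zero, add_zero]
    rw [hΦapply, hF, hq2]
  refine ⟨LinearEquiv.ofBijective (Submodule.liftQ J1 Φ hJ1le) ⟨?_, ?_⟩⟩
  · rw [← LinearMap.ker_eq_bot]
    exact Submodule.ker_liftQ_eq_bot _ _ _ hkerΦ
  · intro z
    obtain ⟨w, hw⟩ := hΦsurj z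
    exact ⟨Submodule.Quotient.mk w, by rw [Submodule.liftQ_apply]; exact hw⟩


end
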